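/- Suppose F : ℝ^d → ℝ is differentiable and G-Lipschitz. For any λ, ε, δ > 0, if x is a (λ, ε)-stationary point of F, then x is a (δ, ε′)-Goldstein stationary point with ε′ = (1 + 2G/(λδ²)) · ε. -/

import Mathlib

open MeasureTheory
open scoped Gradient

/-- `x` is a `(lam, eps)`-stationary point of `F`. -/
def IsStationaryPoint {d : ℕ} (F : EuclideanSpace ℝ (Fin d) → ℝ) (lam eps : ℝ)
    (x : EuclideanSpace ℝ (Fin d)) : Prop :=
  ∃ p : Measure (EuclideanSpace ℝ (Fin d)), IsProbabilityMeasure p ∧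
    Integrable (fun y => y) p ∧ Integrable (fun y => ∇ F y) p ∧
    Integrable (fun y => ‖y - x‖ ^ 2) p ∧
    (∫ y, y ∂p) = x ∧
    ‖∫ y, ∇ F y ∂p‖ + lam * ∫ y, ‖y - x‖ ^ 2 ∂p ≤ eps

/-- `x` is a `(δ, ε')`-Goldstein stationary point of `F`: there is a probability distribution `q`
supported on the closed ball of radius `δ` around `x` with `‖E_{y∼q}[∇F(y)]‖ ≤ ε'`. -/
def IsGoldsteinStationaryPoint {d : ℕ} (F : EuclideanSpace ℝ (Fin d) → ℝ) (δ ε' : ℝ)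
    (x : EuclideanSpace ℝ (Fin d)) : Prop :=
  ∃ q : Measure (EuclideanSpace ℝ (Fin d)), IsProbabilityMeasure q ∧
    q (Metric.closedBall x δ)ᶜ = 0 ∧
    Integrable (fun y => ∇ F y) q ∧
    ‖∫ y, ∇ F y ∂q‖ ≤ ε'

lemma gradient_measurable {d : ℕ} (F : EuclideanSpace ℝ (Fin d) → ℝ) :
    Measurable (fun y => ∇ F y) :=
  ((InnerProductSpace.toDual ℝ _).symm.continuous.measurable).comp (measurable_fderiv ℝ F)

set_option maxHeartbeats 1000000 in
/-- If `F` is `G`-Lipschitz and `x` is a `(λ, ε)`-stationary point, then `x`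
is a `(δ, (1 + 2G/(λδ²))·ε)`-Goldstein stationary point. -/
theorem goldstein_of_stationary {d : ℕ} (F : EuclideanSpace ℝ (Fin d) → ℝ)
    (G lam ε δ : ℝ) (hlam : 0 < lam) (hε : 0 < ε) (hδ : 0 < δ)
    (hF : Differentiable ℝ F)
    (hLip : ∀ y : EuclideanSpace ℝ (Fin d), ‖∇ F y‖ ≤ G)
    (x : EuclideanSpace ℝ (Fin d))
    (hx : IsStationaryPoint F lam ε x) :
    IsGoldsteinStationaryPoint F δ ((1 + 2 * G / (lam * δ ^ 2)) * ε) x := by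
  obtain ⟨p, hp, hiy, hig, him, hmean, hkey⟩ := hx
  set ε' : ℝ := (1 + 2 * G / (lam * δ ^ 2)) * ε with hε'def
  have hG0 : 0 ≤ G := le_trans (norm_nonneg _) (hLip x)
  have hld : 0 < lam * δ ^ 2 := by positivity
  have hε'ε : ε' = ε + 2 * G * ε / (lam * δ ^ 2) := by
    rw [hε'def, add_mul, one_mul, div_mul_eq_mul_div]
  have hε'pos : 0 < ε' := by
    rw [hε'ε]; positivity
  by_cases hcase : G ≤ ε'
  · -- use the Dirac measure at `x`
    refine ⟨Measure.dirac x, inferInstance, ?_, ?_, ?_⟩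
    · rw [Measure.dirac_apply' _ (Metric.isClosed_closedBall.measurableSet.compl)]
      simp [Set.indicator_of_notMem, Metric.mem_closedBall_self hδ.le]
    · exact ⟨(gradient_measurable F).aestronglyMeasurable, by
        simp [HasFiniteIntegral, lintegral_dirac]⟩
    · rw [integral_dirac]
      exact le_trans (hLip x) hcase
  · -- use `p` conditioned on the closed ball
    push_neg at hcase
    set B : Set (EuclideanSpace ℝ (Fin d)) := Metric.closedBall x δ with hBdef
    have hBm : MeasurableSet B := Metric.isClosed_closedBall.measurableSet
    set e : ℝ := ‖∫ y, ∇ F y ∂p‖ with hedef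
    set m : ℝ := ∫ y, ‖y - x‖ ^ 2 ∂p with hmdef
    have he0 : 0 ≤ e := norm_nonneg _
    have hm0 : 0 ≤ m := integral_nonneg fun y => by positivity
    set a : ℝ := (p Bᶜ).toReal with hadef
    have ha0 : 0 ≤ a := ENNReal.toReal_nonneg
    -- Markov inequality: δ² * a ≤ m
    have hmarkov : δ ^ 2 * a ≤ m := by
      have h1 : ∫ y in Bᶜ, δ ^ 2 ∂p ≤ ∫ y in Bᶜ, ‖y - x‖ ^ 2 ∂p := by
        refine setIntegral_mono_on (integrableOn_const (measure_ne_top p _))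
          him.integrableOn hBm.compl fun y hy => ?_
        have : δ < ‖y - x‖ := by
          simpa [hBdef, Metric.mem_closedBall, dist_eq_norm] using hy
        nlinarith [this]
      have h2 : ∫ y in Bᶜ, ‖y - x‖ ^ 2 ∂p ≤ m := by
        rw [hmdef]
        exact setIntegral_le_integral him (Filter.Eventually.of_forall fun y => by positivity)
      rw [setIntegral_const] at h1
      calc δ ^ 2 * a = (p Bᶜ).toReal • δ ^ 2 := by rw [smul_eq_mul]; ring
        _ ≤ m := le_trans h1 h2
    have haε : lam * δ ^ 2 * a ≤ ε := by nlinarith [hkey]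
    -- a < 1, indeed quantitative bound below; first: p B ≠ 0
    have hsum : (p B).toReal + a = 1 := by
      have := measure_add_measure_compl (μ := p) hBm
      rw [measure_univ] at this
      have := congrArg ENNReal.toReal this
      rwa [ENNReal.toReal_add (measure_ne_top p _) (measure_ne_top p _), ENNReal.toReal_one]
        at this
    set b : ℝ := (p B).toReal with hbdef
    have hb0 : 0 ≤ b := ENNReal.toReal_nonneg
    -- Since ε' < G, we get 2*G*ε/(lam δ²) < G, hence a ≤ ε/(lam δ²) < 1/2 < 1
    have hapos : a < 1 := by
      rcases lt_or_ge a 1 with h | h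
      · exact h
      · exfalso
        have h2 : 2 * G * ε / (lam * δ ^ 2) < G - ε := by
          rw [hε'ε] at hcase; linarith
        have h2' : 2 * G * ε < (G - ε) * (lam * δ ^ 2) := (div_lt_iff₀ hld).mp h2
        have hLε : lam * δ ^ 2 ≤ ε := by nlinarith [haε, h, hld]
        nlinarith [mul_le_mul_of_nonneg_left hLε hG0, h2', mul_nonneg hG0 hε.le, hld]
    have hbpos : 0 < b := by linarith [hsum, hapos]
    have hpB0 : p B ≠ 0 := by
      intro h
      rw [hbdef, h] at hbpos; simp at hbpos
    have hpBtop : p B ≠ ⊤ := measure_ne_top p _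
    refine ⟨(p B)⁻¹ • p.restrict B, ⟨?_⟩, ?_, ?_, ?_⟩
    · show ((p B)⁻¹ • p.restrict B) Set.univ = 1
      rw [Measure.smul_apply, Measure.restrict_apply_univ, smul_eq_mul,
        ENNReal.inv_mul_cancel hpB0 hpBtop]
    · rw [Measure.smul_apply, Measure.restrict_apply hBm.compl, Set.compl_inter_self,
        measure_empty, smul_zero]
    · exact (hig.integrableOn.smul_measure (ENNReal.inv_ne_top.2 hpB0))
    · have hrw : ∫ y, ∇ F y ∂((p B)⁻¹ • p.restrict B)
          = b⁻¹ • ∫ y in B, ∇ F y ∂p := by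
        rw [integral_smul_measure, ENNReal.toReal_inv]
      rw [hrw, norm_smul, norm_inv, Real.norm_eq_abs, abs_of_pos hbpos]
      rw [inv_mul_le_iff₀ hbpos]
      -- split the integral
      have hsplit : (∫ y in B, ∇ F y ∂p) = (∫ y, ∇ F y ∂p) - ∫ y in Bᶜ, ∇ F y ∂p := by
        have := integral_add_compl hBm hig
        rw [← this]; abel
      have hcompl : ‖∫ y in Bᶜ, ∇ F y ∂p‖ ≤ G * a := by
        have := norm_setIntegral_le_of_norm_le_const_ae' (μ := p) (s := Bᶜ)
          (measure_lt_top p _)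
          (Filter.Eventually.of_forall fun y _ => hLip y)
        simpa [hadef, Measure.real] using this
      have hnorm : ‖∫ y in B, ∇ F y ∂p‖ ≤ e + G * a := by
        rw [hsplit]
        refine le_trans (norm_sub_le _ _) ?_
        exact add_le_add le_rfl hcompl
      refine le_trans hnorm ?_
      -- final arithmetic: e + G*a ≤ ε' * b, with b = 1 - a
      have hb : b = 1 - a := by linarith [hsum]
      rw [hb]
      have heub : e ≤ ε - lam * δ ^ 2 * a := by nlinarith [hkey, hmarkov]
      have hkey2 : lam * δ ^ 2 * ε' = lam * δ ^ 2 * ε + 2 * G * ε := by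
        rw [hε'ε, mul_add, mul_div_cancel₀ _ hld.ne']
      have hεLa : 0 ≤ ε - lam * δ ^ 2 * a := by linarith [heub, he0]
      nlinarith [hkey2, mul_nonneg (mul_nonneg hld.le ha0) (sub_nonneg.2 hcase.le),
        mul_nonneg hG0 hεLa, mul_nonneg (mul_nonneg hld.le hld.le) ha0,
        mul_le_mul_of_nonneg_left heub hld.le, hld, ha0]
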